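/- arXiv:1801.02784 — 5 statements merged into one kernel-verified Lean document; each statement's English description precedes it below -/
import Mathlib

section
/- Let f(x) = x^r/r - x/e^{(r-1)/r} + (r-1)/(r e) where r ≥ 2 is an integer and e > 0. Then for all x > e^{-1/r}, f(x) ≥ ((r-1)/2) e^{-1+2/r} (x - e^{-1/r})^2. -/
lemma key_binom (m : ℕ) (a t : ℝ) (ha : 0 ≤ a) (ht : 0 ≤ t) :
    a ^ (m + 2) + ((m : ℝ) + 2) * t * a ^ (m + 1)
      + (((m : ℝ) + 2) * ((m : ℝ) + 1) / 2) * t ^ 2 * a ^ m ≤ (a + t) ^ (m + 2) := by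
  induction m with
  | zero => push_cast; nlinarith [sq_nonneg (a + t)]
  | succ n ih =>
    have h1 : (a ^ (n + 2) + ((n : ℝ) + 2) * t * a ^ (n + 1)
        + (((n : ℝ) + 2) * ((n : ℝ) + 1) / 2) * t ^ 2 * a ^ n) * (a + t)
        ≤ (a + t) ^ (n + 2) * (a + t) :=
      mul_le_mul_of_nonneg_right ih (by linarith)
    have h2 : 0 ≤ (((n : ℝ) + 2) * ((n : ℝ) + 1) / 2) * t ^ 3 * a ^ n := by positivity
    push_cast
    have e2 : a ^ (n + 1 + 2) + ((n : ℝ) + 1 + 2) * t * a ^ (n + 1 + 1)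
        + ((n : ℝ) + 1 + 2) * ((n : ℝ) + 1 + 1) / 2 * t ^ 2 * a ^ (n + 1)
      = (a ^ (n + 2) + ((n : ℝ) + 2) * t * a ^ (n + 1)
        + ((n : ℝ) + 2) * ((n : ℝ) + 1) / 2 * t ^ 2 * a ^ n) * (a + t)
        - ((n : ℝ) + 2) * ((n : ℝ) + 1) / 2 * t ^ 3 * a ^ n := by ring
    have e1 : (a + t) ^ (n + 2) * (a + t) = (a + t) ^ (n + 1 + 2) := by ring
    rw [e1] at h1
    linarith [h1, h2, e2]

theorem stmt_2 (r : ℕ) (hr : 2 ≤ r) (e : ℝ) (he : 0 < e)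
    (f : ℝ → ℝ)
    (hf : ∀ x : ℝ, f x = x ^ r / r - x / e ^ (((r : ℝ) - 1) / r) + ((r : ℝ) - 1) / (r * e)) :
    ∀ x : ℝ, e ^ (-(1 : ℝ) / r) < x →
      ((r : ℝ) - 1) / 2 * e ^ (-1 + 2 / (r : ℝ)) * (x - e ^ (-(1 : ℝ) / r)) ^ 2 ≤ f x := by
  obtain ⟨m, rfl⟩ : ∃ m, r = m + 2 := ⟨r - 2, by omega⟩
  intro x hx
  rw [hf]
  push_cast
  push_cast at hx
  set a := e ^ (-(1 : ℝ) / ((m : ℝ) + 2)) with hadef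
  have ha : 0 < a := Real.rpow_pos_of_pos he _
  have hm2 : (0 : ℝ) < (m : ℝ) + 2 := by positivity
  have hpow : ∀ k : ℕ, a ^ k = e ^ ((-(1 : ℝ) / ((m : ℝ) + 2)) * k) := by
    intro k
    rw [hadef, ← Real.rpow_natCast (e ^ (-(1 : ℝ) / ((m : ℝ) + 2))) k, ← Real.rpow_mul he.le]
  have hae : a ^ (m + 2) = e⁻¹ := by
    rw [hpow]
    rw [show (-(1 : ℝ) / ((m : ℝ) + 2)) * ((m + 2 : ℕ) : ℝ) = -1 by push_cast; field_simp]
    rw [Real.rpow_neg_one]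
  have hE2 : e ^ (((m : ℝ) + 2 - 1) / ((m : ℝ) + 2)) = (a ^ (m + 1))⁻¹ := by
    rw [hpow, ← Real.rpow_neg he.le]
    congr 1
    push_cast
    field_simp
    ring
  have hE3 : e ^ (-1 + 2 / ((m : ℝ) + 2)) = a ^ m := by
    rw [hpow]
    congr 1
    field_simp
    ring
  rw [hE3, hE2]
  rw [show x / (a ^ (m + 1))⁻¹ = x * a ^ (m + 1) from by
    rw [div_eq_mul_inv, inv_inv]]
  have hkey := key_binom m a (x - a) ha.le (by linarith)
  rw [show a + (x - a) = x from by ring] at hkey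
  have h1' : ((m : ℝ) + 2 - 1) / (((m : ℝ) + 2) * e) = ((m : ℝ) + 1) / ((m : ℝ) + 2) * a ^ (m + 2) := by
    rw [hae]; field_simp; ring
  rw [h1']
  have hfin : x ^ (m + 2) / ((m : ℝ) + 2) - x * a ^ (m + 1)
        + ((m : ℝ) + 1) / ((m : ℝ) + 2) * a ^ (m + 2)
        - ((m : ℝ) + 2 - 1) / 2 * a ^ m * (x - a) ^ 2
      = (x ^ (m + 2) - (a ^ (m + 2) + ((m : ℝ) + 2) * (x - a) * a ^ (m + 1)
          + (((m : ℝ) + 2) * ((m : ℝ) + 1) / 2) * (x - a) ^ 2 * a ^ m)) / ((m : ℝ) + 2) := by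
    field_simp
    ring
  have h0 : 0 ≤ (x ^ (m + 2) - (a ^ (m + 2) + ((m : ℝ) + 2) * (x - a) * a ^ (m + 1)
      + (((m : ℝ) + 2) * ((m : ℝ) + 1) / 2) * (x - a) ^ 2 * a ^ m)) / ((m : ℝ) + 2) :=
    div_nonneg (by linarith) hm2.le
  linarith
end

section
/- Let r ≥ 3, n ≥ 1 be integers and let a : (Fin n)^r → {0,1} be a 0-1 array (an r-order tensor) with e = ∑ a(i₁,…,i_r) ones, e ≥ 1. Then for every x ∈ ℝ^n with x ≥ 0 and ∑_i x_i^r = 1, one has ∑_{i₁,…,i_r} a(i₁,…,i_r) x_{i₁} ⋯ x_{i_r} ≤ e^{(r-1)/r}. -/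
theorem stmt_4 (n r : ℕ) (hn : 1 ≤ n) (hr : 3 ≤ r)
    (a : (Fin r → Fin n) → ℝ) (ha : ∀ i, a i = 0 ∨ a i = 1)
    (e : ℝ) (he : e = ∑ i : Fin r → Fin n, a i) (he1 : 1 ≤ e)
    (x : Fin n → ℝ) (hx : ∀ i, 0 ≤ x i) (hnorm : ∑ i, x i ^ r = 1) :
    ∑ i : Fin r → Fin n, a i * ∏ j, x (i j) ≤ e ^ (((r : ℝ) - 1) / r) := by
  classical
  set t : (Fin r → Fin n) → ℝ := fun i => ∏ j, x (i j) with ht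
  have htnn : ∀ i, 0 ≤ t i := fun i => Finset.prod_nonneg fun j _ => hx _
  set S : Finset (Fin r → Fin n) := Finset.univ.filter (fun i => a i = 1) with hSdef
  have hcard : e = (S.card : ℝ) := by
    rw [he, hSdef, Finset.card_filter]
    push_cast
    refine Finset.sum_congr rfl fun i _ => ?_
    rcases ha i with h | h <;> simp [h]
  have hLHS : ∑ i : Fin r → Fin n, a i * t i = ∑ i ∈ S, t i := by
    rw [hSdef, Finset.sum_filter]
    refine Finset.sum_congr rfl fun i _ => ?_
    rcases ha i with h | h <;> simp [h]
  set T := ∑ i ∈ S, t i with hT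
  have hTnn : 0 ≤ T := Finset.sum_nonneg fun i _ => htnn i
  have hsum1 : ∑ i ∈ S, t i ^ r ≤ 1 := by
    calc ∑ i ∈ S, t i ^ r ≤ ∑ i : Fin r → Fin n, t i ^ r :=
          Finset.sum_le_sum_of_subset_of_nonneg (Finset.subset_univ S)
            (fun i _ _ => pow_nonneg (htnn i) r)
      _ = ∑ i : Fin r → Fin n, ∏ j, x (i j) ^ r := by
          refine Finset.sum_congr rfl fun i _ => ?_
          rw [ht]; rw [← Finset.prod_pow]
      _ = ∏ j : Fin r, ∑ k, x k ^ r := by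
          rw [Finset.prod_univ_sum]
          simp
      _ = 1 := by rw [hnorm]; simp
  have hrpos : (0:ℝ) < (r:ℝ) := by positivity
  have hepos : (0:ℝ) < e := lt_of_lt_of_le one_pos he1
  have hcardpos : (0:ℝ) < (S.card : ℝ) := by rw [← hcard]; exact hepos
  have hkey := pow_sum_div_card_le_sum_pow (f := t) (s := S)
    (fun i _ => htnn i) (r - 1)
  have hr1 : r - 1 + 1 = r := by omega
  rw [hr1] at hkey
  have hpow : T ^ r ≤ e ^ (r - 1) := by
    rw [hcard]
    have := le_trans hkey hsum1
    rwa [div_le_one (by positivity)] at this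
  rw [hLHS]
  refine le_of_pow_le_pow_left₀ (by omega : r ≠ 0)
    (Real.rpow_nonneg hepos.le _) ?_
  calc T ^ r ≤ e ^ (r - 1) := hpow
    _ = (e ^ (((r:ℝ) - 1) / r)) ^ r := by
        rw [← Real.rpow_natCast (e ^ (((r:ℝ) - 1) / r)) r, ← Real.rpow_mul hepos.le,
          div_mul_cancel₀ _ (ne_of_gt hrpos), ← Real.rpow_natCast e (r - 1)]
        congr 1
        rw [Nat.cast_sub (by omega : 1 ≤ r)]
        norm_num
end

section
/- Let r ≥ 3 be an integer, s, t ≥ 0 reals with t > 0, and w a real with 0 < w and (s+t)w < 1. Define F(w) = [(1-sw)^{-1/(r-1)} - (1-(s+t)w)^{-1/(r-1)}] + [(1 + tw/(1-sw))^{1/(r-1)} - 1]. Then F(w) < 0. -/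
theorem stmt_9 (r : ℕ) (hr : 3 ≤ r) (s t w : ℝ)
    (hs : 0 ≤ s) (ht : 0 < t) (hw : 0 < w) (hstw : (s + t) * w < 1) :
    ((1 - s * w) ^ (-(1 : ℝ) / ((r : ℝ) - 1))
        - (1 - (s + t) * w) ^ (-(1 : ℝ) / ((r : ℝ) - 1)))
      + ((1 + t * w / (1 - s * w)) ^ ((1 : ℝ) / ((r : ℝ) - 1)) - 1) < 0 := by
  have hr3 : (3 : ℝ) ≤ (r : ℝ) := by exact_mod_cast hr
  have hrpos : (0 : ℝ) < (r : ℝ) - 1 := by linarith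
  set p : ℝ := 1 / ((r : ℝ) - 1) with hp
  have hp0 : 0 < p := div_pos one_pos hrpos
  have hp1 : p < 1 := by
    rw [hp, div_lt_one hrpos]; linarith
  have htw : 0 < t * w := mul_pos ht hw
  have hsw : 0 ≤ s * w := mul_nonneg hs hw.le
  have ha : 0 < 1 - s * w := by nlinarith
  have hb : 0 < 1 - (s + t) * w := by linarith
  set a : ℝ := 1 - s * w with ha_def
  set b : ℝ := 1 - (s + t) * w with hb_def
  set u : ℝ := t * w / a with hu_def
  have hu0 : 0 < u := div_pos htw ha
  have hu1 : u < 1 := by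
    rw [hu_def, div_lt_one ha, ha_def]; nlinarith
  have hab : a * (1 - u) = b := by
    rw [hu_def]; field_simp; rw [hb_def, ha_def]; ring
  -- strict Bernoulli
  have h1 : (1 + u) ^ p < 1 + p * u :=
    rpow_one_add_lt_one_add_mul_self (by linarith) hu0.ne' hp0 hp1
  have h2 : (1 - u) ^ p ≤ 1 - p * u := by
    have := rpow_one_add_le_one_add_mul_self (s := -u) (by linarith) hp0.le hp1.le
    have e1 : 1 + -u = 1 - u := by ring
    have e2 : 1 + p * -u = 1 - p * u := by ring
    rw [e1, e2] at this; exact this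
  have hpos : 0 < (1 - u) ^ p := Real.rpow_pos_of_pos (by linarith) p
  have h3 : 1 + p * u ≤ ((1 - u) ^ p)⁻¹ := by
    rw [← one_div, le_div_iff₀ hpos]
    nlinarith [mul_pos hp0 hu0, sq_nonneg (p * u)]
  have h4 : b ^ (-p) = a ^ (-p) * ((1 - u) ^ p)⁻¹ := by
    rw [← hab, Real.mul_rpow ha.le (by linarith), Real.rpow_neg (by linarith : (0:ℝ) ≤ 1 - u)]
  have h5 : 1 ≤ a ^ (-p) := by
    apply Real.one_le_rpow_of_pos_of_le_one_of_nonpos ha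
    · rw [ha_def]; linarith
    · linarith
  have h6 : p * u ≤ b ^ (-p) - a ^ (-p) := by
    rw [h4]
    have hap : 0 < a ^ (-p) := Real.rpow_pos_of_pos ha _
    nlinarith [mul_le_mul_of_nonneg_left h3 hap.le, mul_le_mul_of_nonneg_right h5 (mul_pos hp0 hu0).le]
  have key : a ^ (-p) - b ^ (-p) + ((1 + u) ^ p - 1) < 0 := by linarith
  have e3 : -(1 : ℝ) / ((r : ℝ) - 1) = -p := by rw [hp]; ring
  rw [e3]
  exact key
end

section
/- There exists a 2-dimensional 3-order nonnegative tensor A and a transpose M of A (obtained by permuting the index roles) such that the spectral radii of A and M differ. Concretely, for A with slices A₁ = [[1,2],[2,2]], A₂ = [[2,1],[3,1]] and M with m_{ijk} = a_{kji} (slices M₁ = [[1,2],[2,3]], M₂ = [[2,1],[2,1]]), the number 7 is an eigenvalue of A with positive eigenvector, but 7 is not an eigenvalue of M with positive eigenvector. -/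
theorem stmt_13 (A M : Fin 2 → Fin 2 → Fin 2 → ℝ)
    (hA : A 0 0 0 = 1 ∧ A 0 0 1 = 2 ∧ A 0 1 0 = 2 ∧ A 0 1 1 = 2 ∧
          A 1 0 0 = 2 ∧ A 1 0 1 = 1 ∧ A 1 1 0 = 3 ∧ A 1 1 1 = 1)
    (hM : ∀ i j k, M i j k = A k j i) :
    (∃ x : Fin 2 → ℝ, (∀ i, 0 < x i) ∧
      ∀ i, ∑ j, ∑ k, A i j k * x j * x k = 7 * x i ^ 2) ∧
    ¬(∃ x : Fin 2 → ℝ, (∀ i, 0 < x i) ∧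
      ∀ i, ∑ j, ∑ k, M i j k * x j * x k = 7 * x i ^ 2) := by
  obtain ⟨h1, h2, h3, h4, h5, h6, h7, h8⟩ := hA
  constructor
  · refine ⟨fun _ => 1, fun i => one_pos, fun i => ?_⟩
    fin_cases i <;>
      simp [Fin.sum_univ_two, h1, h2, h3, h4, h5, h6, h7, h8] <;> norm_num
  · rintro ⟨x, hpos, heq⟩
    have e0 := heq 0
    have e1 := heq 1
    simp only [Fin.sum_univ_two, hM, h1, h2, h3, h4, h5, h6, h7, h8] at e0 e1
    have p0 := hpos 0
    have p1 := hpos 1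
    nlinarith [sq_nonneg (x 0), sq_nonneg (x 1), mul_pos p0 p1]
end

section
/- Let r ≥ 2, e ≥ 1, n ≥ 1 be integers and let a : [n]^r → {0,1} with exactly e ones. Suppose x ∈ ℝ^n is nonnegative with ∑ x_i^r = 1 and equality holds in the bound ∑ a(i₁,…,i_r) x_{i₁}⋯x_{i_r} = e^{(r-1)/r}. Then for every r-tuple (i₁,…,i_r) with x_{i₁}⋯x_{i_r} ≠ 0 one has a(i₁,…,i_r) = 1, and moreover (x_{i₁}⋯x_{i_r})^r = 1/e for every such tuple with a(i₁,…,i_r) = 1. -/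
open Finset in
private lemma tangent_aux15 (r : ℕ) (hr : 2 ≤ r) (c t : ℝ) (hc : 0 < c) (ht : 0 ≤ t) :
    ∃ H : ℝ, 0 < H ∧
      t ^ r - c ^ r - r * c ^ (r - 1) * (t - c) = (t - c) ^ 2 * H := by
  refine ⟨∑ i ∈ range r, c ^ (r - 1 - i) * ∑ j ∈ range i, t ^ j * c ^ (i - 1 - j), ?_, ?_⟩
  · have h1 : ∀ i ∈ range r, 0 ≤ c ^ (r - 1 - i) * ∑ j ∈ range i, t ^ j * c ^ (i - 1 - j) := by
      intro i _
      have : 0 ≤ ∑ j ∈ range i, t ^ j * c ^ (i - 1 - j) :=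
        Finset.sum_nonneg fun j _ => by positivity
      positivity
    have h2 : (1 : ℕ) ∈ range r := by simp; omega
    have h3 := Finset.single_le_sum h1 h2
    have h4 : c ^ (r - 1 - 1) * ∑ j ∈ range 1, t ^ j * c ^ (1 - 1 - j) = c ^ (r - 2) := by
      simp [show r - 1 - 1 = r - 2 from by omega]
    calc (0:ℝ) < c ^ (r-2) := by positivity
      _ = _ := h4.symm
      _ ≤ _ := h3
  · calc t ^ r - c ^ r - r * c ^ (r - 1) * (t - c)
        = (∑ i ∈ range r, t ^ i * c ^ (r - 1 - i)) * (t - c)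
            - (∑ _i ∈ range r, c ^ (r - 1)) * (t - c) := by
          rw [geom_sum₂_mul, Finset.sum_const, Finset.card_range, nsmul_eq_mul]
      _ = (∑ i ∈ range r, (t ^ i * c ^ (r - 1 - i) - c ^ (r - 1))) * (t - c) := by
          rw [Finset.sum_sub_distrib]; ring
      _ = (∑ i ∈ range r, c ^ (r - 1 - i) * ((∑ j ∈ range i, t ^ j * c ^ (i - 1 - j)) * (t - c))) * (t - c) := by
          congr 1
          refine Finset.sum_congr rfl fun i hi => ?_
          rw [geom_sum₂_mul t c i]
          have hcr : c ^ (r - 1) = c ^ i * c ^ (r - 1 - i) := by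
            rw [← pow_add]
            congr 1
            simp only [Finset.mem_range] at hi
            omega
          rw [hcr]; ring
      _ = (t - c) ^ 2 * ∑ i ∈ range r, c ^ (r - 1 - i) * ∑ j ∈ range i, t ^ j * c ^ (i - 1 - j) := by
          rw [Finset.sum_mul, Finset.mul_sum]
          refine Finset.sum_congr rfl fun i _ => by ring

theorem stmt_15 (n r e : ℕ) (hn : 1 ≤ n) (hr : 2 ≤ r) (he : 1 ≤ e)
    (a : (Fin r → Fin n) → ℝ) (ha : ∀ i, a i = 0 ∨ a i = 1)
    (hcount : (e : ℝ) = ∑ i : Fin r → Fin n, a i)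
    (x : Fin n → ℝ) (hx0 : ∀ i, 0 ≤ x i) (hnorm : ∑ i, x i ^ r = 1)
    (heq : ∑ i : Fin r → Fin n, a i * ∏ j, x (i j) = (e : ℝ) ^ (((r : ℝ) - 1) / r)) :
    ∀ i : Fin r → Fin n,
      ((∏ j, x (i j)) ≠ 0 → a i = 1) ∧
      (a i = 1 → (∏ j, x (i j)) ^ r = 1 / (e : ℝ)) := by
  have hrR : (r : ℝ) ≠ 0 := by positivity
  have heR : (0:ℝ) < e := by exact_mod_cast he
  set p : (Fin r → Fin n) → ℝ := fun i => ∏ j, x (i j) with hp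
  have hp0 : ∀ i, 0 ≤ p i := fun i => Finset.prod_nonneg fun j _ => hx0 _
  set S : Finset (Fin r → Fin n) := Finset.univ.filter fun i => a i = 1 with hSdef
  -- total r-th power sum is 1
  have hsum_all : ∑ i : Fin r → Fin n, p i ^ r = 1 := by
    have h1 : ∑ i : Fin r → Fin n, p i ^ r
        = ∑ i : Fin r → Fin n, ∏ j, (x (i j)) ^ r := by
      simp [hp, Finset.prod_pow]
    rw [h1, ← Fintype.piFinset_univ,
      ← Finset.prod_univ_sum (fun _ : Fin r => (Finset.univ : Finset (Fin n)))
        (fun _ k => x k ^ r)]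
    simp [hnorm]
  -- cardinality of the support
  have hsplit : ∀ f : (Fin r → Fin n) → ℝ,
      ∑ i : Fin r → Fin n, f i = ∑ i ∈ S, f i + ∑ i ∈ Finset.univ.filter (fun i => ¬ a i = 1), f i :=
    fun f => (Finset.sum_filter_add_sum_filter_not _ _ _).symm
  have hoffa : ∀ i ∈ Finset.univ.filter (fun i => ¬ a i = 1), a i = 0 := by
    intro i hi
    simp only [Finset.mem_filter] at hi
    exact (ha i).resolve_right hi.2
  have hcard : ((S.card : ℝ)) = e := by
    rw [hcount, hsplit a, Finset.sum_eq_zero hoffa, add_zero]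
    rw [Finset.sum_congr rfl (fun i hi => (Finset.mem_filter.mp hi).2)]
    simp [hSdef]
  have hSsum : ∑ i ∈ S, p i = (e : ℝ) ^ (((r : ℝ) - 1) / r) := by
    rw [← heq, hsplit (fun i => a i * p i),
      Finset.sum_eq_zero (s := Finset.univ.filter fun i => ¬ a i = 1)
        (fun i hi => by rw [hoffa i hi, zero_mul]), add_zero]
    exact (Finset.sum_congr rfl fun i hi => by
      rw [(Finset.mem_filter.mp hi).2, one_mul]).symm
  -- the constant c
  set c : ℝ := (e : ℝ) ^ (-(1 : ℝ) / r) with hcdef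
  have hc : 0 < c := Real.rpow_pos_of_pos heR _
  have hcr : c ^ r = 1 / (e : ℝ) := by
    rw [hcdef, ← Real.rpow_natCast ((e:ℝ) ^ (-(1:ℝ)/r)) r, ← Real.rpow_mul heR.le]
    rw [show (-(1:ℝ)/r) * r = -1 by field_simp]
    rw [Real.rpow_neg_one]
    exact inv_eq_one_div _
  have hec : (e : ℝ) ^ (((r : ℝ) - 1) / r) = e * c := by
    rw [hcdef, show ((r:ℝ) - 1)/r = 1 + (-1/r) by field_simp; ring]
    rw [Real.rpow_add heR, Real.rpow_one]
  -- lower bound on ∑_S p^r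
  have htangent : ∀ i ∈ S, c ^ r + r * c ^ (r-1) * (p i - c) ≤ p i ^ r := by
    intro i _
    obtain ⟨H, hH, hid⟩ := tangent_aux15 r hr c (p i) hc (hp0 i)
    nlinarith [sq_nonneg (p i - c)]
  have hlin : ∑ i ∈ S, (c ^ r + r * c ^ (r-1) * (p i - c)) = 1 := by
    rw [Finset.sum_add_distrib, Finset.sum_const, nsmul_eq_mul, ← Finset.mul_sum,
      Finset.sum_sub_distrib, Finset.sum_const, nsmul_eq_mul, hcard, hSsum, hec, hcr]
    field_simp
    ring
  have hge : (1:ℝ) ≤ ∑ i ∈ S, p i ^ r := by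
    rw [← hlin]; exact Finset.sum_le_sum htangent
  have hle : ∑ i ∈ S, p i ^ r ≤ 1 := by
    rw [← hsum_all]
    exact Finset.sum_le_sum_of_subset_of_nonneg (Finset.subset_univ S)
      (fun j _ _ => pow_nonneg (hp0 j) r)
  have heqS : ∑ i ∈ S, p i ^ r = 1 := le_antisymm hle hge
  -- on S, p i = c
  have honS : ∀ i ∈ S, p i = c := by
    have hz : ∑ i ∈ S, (p i ^ r - (c ^ r + r * c ^ (r-1) * (p i - c))) = 0 := by
      rw [Finset.sum_sub_distrib, heqS, hlin, sub_self]
    have hterm := (Finset.sum_eq_zero_iff_of_nonneg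
      (fun i hi => sub_nonneg.mpr (htangent i hi))).mp hz
    intro i hi
    obtain ⟨H, hH, hid⟩ := tangent_aux15 r hr c (p i) hc (hp0 i)
    have h0 := hterm i hi
    have : (p i - c) ^ 2 * H = 0 := by nlinarith
    have h2 : (p i - c) ^ 2 = 0 := by
      rcases mul_eq_zero.mp this with h | h
      · exact h
      · exact absurd h hH.ne'
    have := pow_eq_zero_iff (n := 2) (by norm_num) |>.mp h2
    linarith
  -- off S, p i = 0
  have hoff : ∀ i ∉ S, p i = 0 := by
    have hz : ∑ i ∈ Finset.univ.filter (fun i => ¬ a i = 1), p i ^ r = 0 := by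
      have := hsplit (fun i => p i ^ r)
      rw [hsum_all, heqS] at this
      linarith
    intro i hi
    have hmem : i ∈ Finset.univ.filter (fun i => ¬ a i = 1) := by
      simp only [Finset.mem_filter, Finset.mem_univ, true_and]
      intro h; exact hi (by simp [hSdef, h])
    have := (Finset.sum_eq_zero_iff_of_nonneg (fun j _ => pow_nonneg (hp0 j) r)).mp hz i hmem
    exact pow_eq_zero_iff (by omega) |>.mp this
  intro i
  constructor
  · intro hpne
    by_contra h
    exact hpne (hoff i (by simp [hSdef, h]))
  · intro h1
    have hiS : i ∈ S := by simp [hSdef, h1]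
    rw [show (∏ j, x (i j)) = p i from rfl, honS i hiS, hcr]
end
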